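/- In a balanced binary pairwise model with a unique integral optimum, the LP relaxation is (α/2)-tight, where α > 0 is the gap between the best and second-best integral solution values. That is, the optimal integral value exceeds the value of any fractional (non-integral) vertex of the local polytope by at least α/2. -/

import Mathlib

open Classical in
noncomputable def optY (t u v : ℝ) : ℝ := if 0 ≤ t then t * min u v else t * max 0 (u + v - 1)

open Classical in
noncomputable def optSel (t u v : ℝ) : ℝ := if 0 ≤ t then min u v else max 0 (u + v - 1)

lemma max0_le_min {u v : ℝ} (h0u : 0 ≤ u) (hu1 : u ≤ 1) (h0v : 0 ≤ v) (hv1 : v ≤ 1) :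
    max 0 (u + v - 1) ≤ min u v := by
  exact max_le (le_min h0u h0v) (le_min (by linarith) (by linarith))

lemma optSel_lb {t u v : ℝ} (h0u : 0 ≤ u) (hu1 : u ≤ 1) (h0v : 0 ≤ v) (hv1 : v ≤ 1) :
    max 0 (u + v - 1) ≤ optSel t u v := by
  unfold optSel; split
  · exact max0_le_min h0u hu1 h0v hv1
  · exact le_refl _

lemma optSel_ub {t u v : ℝ} (h0u : 0 ≤ u) (hu1 : u ≤ 1) (h0v : 0 ≤ v) (hv1 : v ≤ 1) :
    optSel t u v ≤ min u v := by
  unfold optSel; split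
  · exact le_refl _
  · exact max0_le_min h0u hu1 h0v hv1

lemma optY_eq_sel (t u v : ℝ) : optY t u v = t * optSel t u v := by
  unfold optY optSel; split <;> rfl

lemma mul_le_optY {t u v y : ℝ} (hlb : max 0 (u + v - 1) ≤ y) (hub : y ≤ min u v) :
    t * y ≤ optY t u v := by
  unfold optY; split
  · next h => exact mul_le_mul_of_nonneg_left hub h
  · next h => exact mul_le_mul_of_nonpos_left hlb (le_of_lt (not_le.mp h))

lemma int_forced {u v : ℝ} (hu : u = 0 ∨ u = 1) (hv : v = 0 ∨ v = 1) :
    max 0 (u + v - 1) = min u v := by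
  rcases hu with rfl | rfl <;> rcases hv with rfl | rfl <;> norm_num

lemma endpoint_force {a b s t c : ℝ} (ha : 0 < a) (hb : 0 < b) (hab : a + b = 1)
    (hs : 0 ≤ s) (hs1 : s ≤ 1) (ht : 0 ≤ t) (ht1 : t ≤ 1)
    (hcomb : a * s + b * t = c) (hc : c = 0 ∨ c = 1) : s = c ∧ t = c := by
  rcases hc with rfl | rfl <;> constructor <;> nlinarith

lemma class_of {z x : ℝ} (hz : z = 0 ∨ z = 1) (hx : x = 0 ∨ x = 1/2 ∨ x = 1) :
    x = z ∨ x = 1 - z ∨ x = 1/2 := by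
  rcases hz with rfl | rfl <;> rcases hx with rfl | rfl | rfl <;> norm_num

lemma sum_comb {ι : Type*} (s : Finset ι) (g1 g2 g3 g4 : ι → ℝ) :
    2 * (∑ i ∈ s, g1 i) + (∑ i ∈ s, g2 i) - 2 * (∑ i ∈ s, g3 i) - (∑ i ∈ s, g4 i)
      = ∑ i ∈ s, (2 * g1 i + g2 i - 2 * g3 i - g4 i) := by
  rw [Finset.mul_sum, Finset.mul_sum, ← Finset.sum_add_distrib, ← Finset.sum_sub_distrib,
    ← Finset.sum_sub_distrib]

lemma unary_core {z x : ℝ} (hz : z = 0 ∨ z = 1) (hx : x = z ∨ x = 1 - z ∨ x = 1/2) :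
    2 * (if x = z then z else 1/2) + (if x = 1/2 then z else x) - 2 * x - z = 0 := by
  rcases hz with rfl | rfl <;> rcases hx with rfl | rfl | rfl <;> norm_num

lemma edge_core (t : ℝ) {za zb ua ub : ℝ} (hza : za = 0 ∨ za = 1) (hzb : zb = 0 ∨ zb = 1)
    (hua : ua = za ∨ ua = 1 - za ∨ ua = 1/2) (hub : ub = zb ∨ ub = 1 - zb ∨ ub = 1/2) :
    0 ≤ 2 * optY t (if ua = za then za else 1/2) (if ub = zb then zb else 1/2)
        + optY t (if ua = 1/2 then za else ua) (if ub = 1/2 then zb else ub)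
        - 2 * optY t ua ub - optY t za zb := by
  rcases hza with rfl | rfl <;> rcases hzb with rfl | rfl <;>
    rcases hua with rfl | rfl | rfl <;> rcases hub with rfl | rfl | rfl <;>
    norm_num [optY, min_def, max_def] <;>
    first
      | nlinarith
      | (split_ifs with ht <;> nlinarith)

lemma sum_affine {ι : Type*} (s : Finset ι) (θ g h : ι → ℝ) (a b : ℝ) :
    ∑ j ∈ s, θ j * (a * g j + b * h j) = a * (∑ j ∈ s, θ j * g j) + b * (∑ j ∈ s, θ j * h j) := by
  rw [Finset.mul_sum, Finset.mul_sum, ← Finset.sum_add_distrib]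
  exact Finset.sum_congr rfl fun j _ => by ring

noncomputable def selP (n : ℕ) (θe : Fin n × Fin n → ℝ) (x : Fin n → ℝ) :
    (Fin n → ℝ) × (Fin n × Fin n → ℝ) :=
  (x, fun e => optSel (θe e) (x e.1) (x e.2))

noncomputable def PhiV (n : ℕ) (θv : Fin n → ℝ) (θe : Fin n × Fin n → ℝ) (x : Fin n → ℝ) : ℝ :=
  (∑ k, θv k * x k) + ∑ e, optY (θe e) (x e.1) (x e.2)

theorem stmt_8 (n : ℕ) (E : Finset (Fin n × Fin n))
    (θv : Fin n → ℝ) (θe : Fin n × Fin n → ℝ)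
    (f : (Fin n → ℝ) × (Fin n × Fin n → ℝ) → ℝ)
    (hf : ∀ η, f η = (∑ i, θv i * η.1 i) + ∑ e ∈ E, θe e * η.2 e)
    (𝕃 : Set ((Fin n → ℝ) × (Fin n × Fin n → ℝ)))
    (h𝕃 : 𝕃 = {η | (∀ i, 0 ≤ η.1 i ∧ η.1 i ≤ 1) ∧
      ∀ e ∈ E, max 0 (η.1 e.1 + η.1 e.2 - 1) ≤ η.2 e ∧ η.2 e ≤ min (η.1 e.1) (η.1 e.2)})
    -- all vertices of the local polytope are half-integral
    (hhalf : ∀ η ∈ Set.extremePoints ℝ 𝕃,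
      (∀ i, η.1 i ∈ ({0, 1/2, 1} : Set ℝ)) ∧ ∀ e ∈ E, η.2 e ∈ ({0, 1/2, 1} : Set ℝ))
    -- balancedness: the constrained optimum F^i(z) is linear in z on [0,1]
    (hbalanced : ∀ i : Fin n, ∃ a b : ℝ, ∀ z ∈ Set.Icc (0:ℝ) 1,
      sSup (f '' {η ∈ 𝕃 | η.1 i = z}) = a * z + b)
    (α m : ℝ) (hα : 0 < α)
    (η₁ : (Fin n → ℝ) × (Fin n × Fin n → ℝ))
    (hη₁ : η₁ ∈ Set.extremePoints ℝ 𝕃) (hη₁int : ∀ i, η₁.1 i = 0 ∨ η₁.1 i = 1)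
    (hη₁val : f η₁ = m)
    (hopt : ∀ η ∈ 𝕃, f η ≤ m)
    -- every other integral vertex has value at most m − α
    (hsecond : ∀ η ∈ Set.extremePoints ℝ 𝕃,
      (∀ i, η.1 i = 0 ∨ η.1 i = 1) → η ≠ η₁ → f η ≤ m - α) :
    ∀ η ∈ Set.extremePoints ℝ 𝕃, (∃ i, ¬(η.1 i = 0 ∨ η.1 i = 1)) →
      f η ≤ m - α / 2 := by
  classical
  intro η hη hfrac
  obtain ⟨i, hi⟩ := hfrac
  by_cases hE : E = Finset.univ
  case neg =>
    -- some edge coordinate is unconstrained: no extreme points at all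
    exfalso
    obtain ⟨e₀, he₀⟩ : ∃ e, e ∉ E := by
      by_contra h
      push_neg at h
      exact hE (Finset.eq_univ_iff_forall.2 h)
    set d : (Fin n → ℝ) × (Fin n × Fin n → ℝ) := (0, Pi.single e₀ 1) with hd
    have hmem : ∀ t : ℝ, η₁ + t • d ∈ 𝕃 := by
      intro t
      rw [h𝕃]
      obtain ⟨h1, h2⟩ := h𝕃 ▸ hη₁.1
      refine ⟨fun j => by simpa [hd] using h1 j, fun e he => ?_⟩
      have : (η₁ + t • d).2 e = η₁.2 e := by
        have hne : e ≠ e₀ := fun h => he₀ (h ▸ he)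
        simp [hd, Pi.single_eq_of_ne hne]
      have h1' : ∀ j, (η₁ + t • d).1 j = η₁.1 j := by intro j; simp [hd]
      rw [this, h1' e.1, h1' e.2]
      exact h2 e he
    have hseg : η₁ ∈ openSegment ℝ (η₁ + (-1 : ℝ) • d) (η₁ + (1 : ℝ) • d) := by
      refine ⟨1/2, 1/2, by norm_num, by norm_num, by norm_num, ?_⟩
      module
    have := hη₁.2 (hmem (-1)) (hmem 1) hseg
    have hd0 : η₁ + (1 : ℝ) • d = η₁ :=
      hη₁.2 (hmem 1) (hmem (-1)) (by rw [openSegment_symm]; exact hseg)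
    have h10 : (1:ℝ) = 0 := by
      have h := congrArg (fun p => p.2 e₀) hd0
      simp only [hd, Prod.snd_add, Prod.smul_snd, one_smul, Pi.add_apply,
        Pi.single_eq_same] at h
      linarith
    norm_num at h10
  case pos =>
    subst hE
    subst h𝕃
    set L : Set ((Fin n → ℝ) × (Fin n × Fin n → ℝ)) :=
      {η | (∀ i, 0 ≤ η.1 i ∧ η.1 i ≤ 1) ∧
        ∀ e ∈ Finset.univ, max 0 (η.1 e.1 + η.1 e.2 - 1) ≤ η.2 e ∧
          η.2 e ≤ min (η.1 e.1) (η.1 e.2)} with hLdef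
    have memL : ∀ w, w ∈ L ↔ ((∀ j, 0 ≤ w.1 j ∧ w.1 j ≤ 1) ∧
        ∀ e : Fin n × Fin n, max 0 (w.1 e.1 + w.1 e.2 - 1) ≤ w.2 e ∧
          w.2 e ≤ min (w.1 e.1) (w.1 e.2)) := by
      intro w
      rw [hLdef]
      simp only [Set.mem_setOf_eq, Finset.mem_univ, forall_true_left, true_implies]
    have hz : ∀ k, η₁.1 k = 0 ∨ η₁.1 k = 1 := hη₁int
    have hη₁L : η₁ ∈ L := hη₁.1
    have hη₁b : ∀ k, 0 ≤ η₁.1 k ∧ η₁.1 k ≤ 1 := ((memL η₁).1 hη₁L).1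
    -- selP basic facts
    have hPmem : ∀ x : Fin n → ℝ, (∀ k, 0 ≤ x k ∧ x k ≤ 1) → selP n θe x ∈ L := by
      intro x hx
      rw [memL]
      refine ⟨fun j => hx j, fun e => ?_⟩
      exact ⟨optSel_lb (hx e.1).1 (hx e.1).2 (hx e.2).1 (hx e.2).2,
        optSel_ub (hx e.1).1 (hx e.1).2 (hx e.2).1 (hx e.2).2⟩
    have hPval : ∀ x : Fin n → ℝ, f (selP n θe x) = PhiV n θv θe x := by
      intro x
      rw [hf]
      unfold selP PhiV
      congr 1
      exact Finset.sum_congr rfl fun e _ => (optY_eq_sel (θe e) (x e.1) (x e.2)).symm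
    have hfle : ∀ w ∈ L, f w ≤ PhiV n θv θe w.1 := by
      intro w hw
      obtain ⟨hb, he⟩ := (memL w).1 hw
      rw [hf]
      unfold PhiV
      refine add_le_add (le_refl _) (Finset.sum_le_sum fun e _ => ?_)
      exact mul_le_optY (he e).1 (he e).2
    have hPzeq : selP n θe η₁.1 = η₁ := by
      refine Prod.ext rfl (funext fun e => ?_)
      have hforced := int_forced (hz e.1) (hz e.2)
      have hbnd := (((memL η₁).1 hη₁L).2) e
      have h1 : η₁.2 e = min (η₁.1 e.1) (η₁.1 e.2) :=
        le_antisymm hbnd.2 (hforced ▸ hbnd.1)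
      have h2 : optSel (θe e) (η₁.1 e.1) (η₁.1 e.2) = min (η₁.1 e.1) (η₁.1 e.2) := by
        refine le_antisymm (optSel_ub (hη₁b e.1).1 (hη₁b e.1).2 (hη₁b e.2).1 (hη₁b e.2).2) ?_
        exact hforced ▸ optSel_lb (hη₁b e.1).1 (hη₁b e.1).2 (hη₁b e.2).1 (hη₁b e.2).2
      show optSel (θe e) (η₁.1 e.1) (η₁.1 e.2) = η₁.2 e
      rw [h1, h2]
    have hΦz : PhiV n θv θe η₁.1 = m := by rw [← hPval, hPzeq, hη₁val]
    -- the configuration set and V₁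
    set DD : Set (Fin n → ℝ) :=
      {x | (∀ k, x k = 0 ∨ x k = 1/2 ∨ x k = 1) ∧ ∃ k, x k = 1 - η₁.1 k} with hDDdef
    set V₁ : ℝ := sSup (PhiV n θv θe '' DD) with hV₁def
    have hDDb : ∀ x ∈ DD, ∀ k, 0 ≤ x k ∧ x k ≤ 1 := by
      intro x hx k
      rcases hx.1 k with h | h | h <;> rw [h] <;> norm_num
    have hbddD : BddAbove (PhiV n θv θe '' DD) := by
      refine ⟨m, ?_⟩
      rintro y ⟨x, hx, rfl⟩
      rw [← hPval]
      exact hopt _ (hPmem x (hDDb x hx))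
    have hDne : DD.Nonempty := by
      refine ⟨fun k => 1 - η₁.1 k, fun k => ?_, ⟨i, rfl⟩⟩
      rcases hz k with h | h <;> norm_num [h]
    -- slice basics
    have hSlbdd : ∀ (k : Fin n) (c : ℝ), BddAbove (f '' {w | w ∈ L ∧ w.1 k = c}) := by
      intro k c
      exact ⟨m, by rintro y ⟨w, hw, rfl⟩; exact hopt w hw.1⟩
    have hSlne : ∀ (k : Fin n) (c : ℝ), 0 ≤ c → c ≤ 1 →
        (f '' {w | w ∈ L ∧ w.1 k = c}).Nonempty := by
      intro k c h0 h1
      refine ⟨f (selP n θe (Function.update η₁.1 k c)), ⟨selP n θe _, ⟨?_, ?_⟩, rfl⟩⟩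
      · apply hPmem
        intro j
        rcases eq_or_ne j k with rfl | hne
        · simpa using ⟨h0, h1⟩
        · simpa [Function.update_of_ne hne] using hη₁b j
      · show (Function.update η₁.1 k c) k = c
        simp
    have hfc : Continuous f := by
      have hrepr : f = fun w => (∑ j, θv j * w.1 j) + ∑ e, θe e * w.2 e := funext hf
      rw [hrepr]
      refine Continuous.add ?_ ?_
      · exact continuous_finset_sum _ fun j _ =>
          continuous_const.mul ((continuous_apply j).comp continuous_fst)
      · exact continuous_finset_sum _ fun e _ =>
          continuous_const.mul ((continuous_apply e).comp continuous_snd)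
    have hflin : ∀ (a b : ℝ) (p q : (Fin n → ℝ) × (Fin n × Fin n → ℝ)),
        f (a • p + b • q) = a * f p + b * f q := by
      intro a b p q
      rw [hf, hf, hf]
      have h1 : ∀ j : Fin n, (a • p + b • q).1 j = a * p.1 j + b * q.1 j := fun j => by
        simp [mul_comm]
      have h2 : ∀ e : Fin n × Fin n, (a • p + b • q).2 e = a * p.2 e + b * q.2 e := fun e => by
        simp [mul_comm]
      calc (∑ j, θv j * (a • p + b • q).1 j) + ∑ e, θe e * (a • p + b • q).2 e
          = (∑ j, θv j * (a * p.1 j + b * q.1 j)) + ∑ e, θe e * (a * p.2 e + b * q.2 e) := by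
            simp only [h1, h2]
        _ = a * ((∑ j, θv j * p.1 j) + ∑ e, θe e * p.2 e)
              + b * ((∑ j, θv j * q.1 j) + ∑ e, θe e * q.2 e) := by
            rw [sum_affine, sum_affine]; ring
    have hLconv : Convex ℝ L := by
      intro p hp q hq a b ha hb hab
      obtain ⟨hp1, hp2⟩ := (memL p).1 hp
      obtain ⟨hq1, hq2⟩ := (memL q).1 hq
      rw [memL]
      have hco : ∀ j, (a • p + b • q).1 j = a * p.1 j + b * q.1 j := fun j => by
        simp [mul_comm]
      have hco2 : ∀ e, (a • p + b • q).2 e = a * p.2 e + b * q.2 e := fun e => by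
        simp [mul_comm]
      constructor
      · intro j
        rw [hco j]
        constructor
        · nlinarith [(hp1 j).1, (hq1 j).1]
        · nlinarith [(hp1 j).2, (hq1 j).2]
      · intro e
        rw [hco2 e, hco e.1, hco e.2]
        have plb : p.1 e.1 + p.1 e.2 - 1 ≤ p.2 e := le_trans (le_max_right _ _) (hp2 e).1
        have qlb : q.1 e.1 + q.1 e.2 - 1 ≤ q.2 e := le_trans (le_max_right _ _) (hq2 e).1
        have p0 : (0:ℝ) ≤ p.2 e := le_trans (le_max_left _ _) (hp2 e).1
        have q0 : (0:ℝ) ≤ q.2 e := le_trans (le_max_left _ _) (hq2 e).1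
        have pu1 : p.2 e ≤ p.1 e.1 := le_trans (hp2 e).2 (min_le_left _ _)
        have pu2 : p.2 e ≤ p.1 e.2 := le_trans (hp2 e).2 (min_le_right _ _)
        have qu1 : q.2 e ≤ q.1 e.1 := le_trans (hq2 e).2 (min_le_left _ _)
        have qu2 : q.2 e ≤ q.1 e.2 := le_trans (hq2 e).2 (min_le_right _ _)
        constructor
        · apply max_le
          · nlinarith
          · nlinarith
        · apply le_min
          · nlinarith
          · nlinarith
    -- the Krein-Milman bound on the disagreeing slices
    have hKM : ∀ k : Fin n, ∀ w ∈ L, w.1 k = 1 - η₁.1 k → f w ≤ V₁ := by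
      intro k w hwL hwk
      have hc01 : (1 - η₁.1 k) = 0 ∨ (1 - η₁.1 k) = 1 := by
        rcases hz k with h | h
        · right; rw [h]; norm_num
        · left; rw [h]; norm_num
      set S : Set ((Fin n → ℝ) × (Fin n × Fin n → ℝ)) :=
        {v | v ∈ L ∧ v.1 k = 1 - η₁.1 k} with hSdef
      have hLclosed : IsClosed L := by
        have hrep : L = (⋂ j : Fin n, {v : (Fin n → ℝ) × (Fin n × Fin n → ℝ) |
              0 ≤ v.1 j} ∩ {v | v.1 j ≤ 1}) ∩
            ⋂ e : Fin n × Fin n, ({v : (Fin n → ℝ) × (Fin n × Fin n → ℝ) |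
              max 0 (v.1 e.1 + v.1 e.2 - 1) ≤ v.2 e} ∩
              {v | v.2 e ≤ min (v.1 e.1) (v.1 e.2)}) := by
          ext v
          rw [memL]
          constructor
          · rintro ⟨h1, h2⟩
            exact ⟨Set.mem_iInter.2 fun j => ⟨(h1 j).1, (h1 j).2⟩,
              Set.mem_iInter.2 fun e => ⟨(h2 e).1, (h2 e).2⟩⟩
          · rintro ⟨h1, h2⟩
            exact ⟨fun j => ⟨(Set.mem_iInter.1 h1 j).1, (Set.mem_iInter.1 h1 j).2⟩,
              fun e => ⟨(Set.mem_iInter.1 h2 e).1, (Set.mem_iInter.1 h2 e).2⟩⟩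
        rw [hrep]
        have c1 : ∀ j, Continuous fun v : (Fin n → ℝ) × (Fin n × Fin n → ℝ) => v.1 j :=
          fun j => (continuous_apply j).comp continuous_fst
        have c2 : ∀ e, Continuous fun v : (Fin n → ℝ) × (Fin n × Fin n → ℝ) => v.2 e :=
          fun e => (continuous_apply e).comp continuous_snd
        refine IsClosed.inter (isClosed_iInter fun j => IsClosed.inter ?_ ?_)
          (isClosed_iInter fun e => IsClosed.inter ?_ ?_)
        · exact isClosed_le continuous_const (c1 j)
        · exact isClosed_le (c1 j) continuous_const
        · exact isClosed_le
            (continuous_const.max (((c1 e.1).add (c1 e.2)).sub continuous_const)) (c2 e)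
        · exact isClosed_le (c2 e) ((c1 e.1).min (c1 e.2))
      have hSclosed : IsClosed S := by
        have hrw : S = L ∩ {v | v.1 k = 1 - η₁.1 k} := rfl
        rw [hrw]
        exact hLclosed.inter
          (isClosed_eq ((continuous_apply k).comp continuous_fst) continuous_const)
      have hSbdd : Bornology.IsBounded S := by
        rw [isBounded_iff_forall_norm_le]
        refine ⟨1, fun v hv => ?_⟩
        obtain ⟨h1, h2⟩ := (memL v).1 hv.1
        rw [Prod.norm_def]
        apply max_le
        · rw [pi_norm_le_iff_of_nonneg zero_le_one]
          intro j
          rw [Real.norm_eq_abs, abs_le]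
          exact ⟨by linarith [(h1 j).1], (h1 j).2⟩
        · rw [pi_norm_le_iff_of_nonneg zero_le_one]
          intro e
          rw [Real.norm_eq_abs, abs_le]
          have lb : (0:ℝ) ≤ v.2 e := le_trans (le_max_left _ _) (h2 e).1
          have ub : v.2 e ≤ 1 :=
            le_trans (le_trans (h2 e).2 (min_le_left _ _)) (h1 e.1).2
          exact ⟨by linarith, ub⟩
      have hScomp : IsCompact S := Metric.isCompact_of_isClosed_isBounded hSclosed hSbdd
      have hSconv : Convex ℝ S := by
        intro p hp q hq a b ha hb hab
        refine ⟨hLconv hp.1 hq.1 ha hb hab, ?_⟩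
        have hcm : (a • p + b • q).1 k = a * p.1 k + b * q.1 k := by simp [mul_comm]
        rw [hcm, hp.2, hq.2]
        linear_combination (1 - η₁.1 k) * hab
      have hKMeq := closure_convexHull_extremePoints hScomp hSconv
      have hsub : S.extremePoints ℝ ⊆ {v | f v ≤ V₁} := by
        intro v hv
        have hvL : v ∈ Set.extremePoints ℝ L := by
          refine ⟨hv.1.1, fun p hp q hq hseg => ?_⟩
          obtain ⟨a, b, ha, hb, hab, hcomb⟩ := hseg
          have hcoord : a * p.1 k + b * q.1 k = 1 - η₁.1 k := by
            have h := congrArg (fun t => t.1 k) hcomb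
            simp only [Prod.fst_add, Prod.smul_fst, Pi.add_apply, Pi.smul_apply,
              smul_eq_mul] at h
            rw [h]
            exact hv.1.2
          have hforce := endpoint_force ha hb hab (((memL p).1 hp).1 k).1
            (((memL p).1 hp).1 k).2 (((memL q).1 hq).1 k).1 (((memL q).1 hq).1 k).2
            hcoord hc01
          exact hv.2 ⟨hp, hforce.1⟩ ⟨hq, hforce.2⟩ ⟨a, b, ha, hb, hab, hcomb⟩
        have hvhalf : ∀ j, v.1 j = 0 ∨ v.1 j = 1/2 ∨ v.1 j = 1 := by
          intro j
          have := (hhalf v hvL).1 j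
          simpa [Set.mem_insert_iff, Set.mem_singleton_iff] using this
        have hPhile : PhiV n θv θe v.1 ≤ V₁ := by
          rw [hV₁def]
          exact le_csSup hbddD ⟨v.1, ⟨hvhalf, ⟨k, hv.1.2⟩⟩, rfl⟩
        exact le_trans (hfle v hv.1.1) hPhile
      have hKconv : Convex ℝ {v | f v ≤ V₁} := by
        intro p hp q hq a b ha hb hab
        show f (a • p + b • q) ≤ V₁
        rw [hflin a b p q]
        have hp' : f p ≤ V₁ := hp
        have hq' : f q ≤ V₁ := hq
        have hV : a * V₁ + b * V₁ = V₁ := by linear_combination V₁ * hab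
        linarith [mul_le_mul_of_nonneg_left hp' ha, mul_le_mul_of_nonneg_left hq' hb, hV]
      have hKclosed : IsClosed {v | f v ≤ V₁} := isClosed_le hfc continuous_const
      have hfinal : S ⊆ {v | f v ≤ V₁} := by
        rw [← hKMeq]
        exact hKclosed.closure_subset_iff.2 (convexHull_min hsub hKconv)
      exact hfinal ⟨hwL, hwk⟩
    -- KEY: every point of a half slice is below (m + V₁)/2
    have hKEY : ∀ k : Fin n, ∀ w ∈ L, w.1 k = 1/2 → f w ≤ (m + V₁)/2 := by
      intro k w hwL hwk
      obtain ⟨a, b, hab⟩ := hbalanced k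
      have hzIcc : η₁.1 k ∈ Set.Icc (0:ℝ) 1 := by
        rcases hz k with h | h <;> rw [h] <;> exact ⟨by norm_num, by norm_num⟩
      have hz'Icc : 1 - η₁.1 k ∈ Set.Icc (0:ℝ) 1 := by
        rcases hz k with h | h <;> rw [h] <;> exact ⟨by norm_num, by norm_num⟩
      have e1 : a * η₁.1 k + b = m := by
        rw [← hab (η₁.1 k) hzIcc]
        apply le_antisymm
        · exact csSup_le (hSlne k (η₁.1 k) hzIcc.1 hzIcc.2)
            (by rintro y ⟨w', hw', rfl⟩; exact hopt w' hw'.1)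
        · rw [← hη₁val]
          exact le_csSup (hSlbdd k (η₁.1 k)) ⟨η₁, ⟨hη₁L, rfl⟩, rfl⟩
      have e2 : a * (1 - η₁.1 k) + b ≤ V₁ := by
        rw [← hab (1 - η₁.1 k) hz'Icc]
        exact csSup_le (hSlne k _ hz'Icc.1 hz'Icc.2)
          (by rintro y ⟨w', hw', rfl⟩; exact hKM k w' hw'.1 hw'.2)
      have e3 : f w ≤ a * (1/2) + b := by
        rw [← hab (1/2) ⟨by norm_num, by norm_num⟩]
        exact le_csSup (hSlbdd k (1/2)) ⟨w, ⟨hwL, hwk⟩, rfl⟩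
      have e5 : a * (1/2) + b = ((a * η₁.1 k + b) + (a * (1 - η₁.1 k) + b))/2 := by ring
      linarith
    -- bound every disagreeing half-integral configuration
    have hcfg : ∀ x : Fin n → ℝ, (∀ k, x k = 0 ∨ x k = 1/2 ∨ x k = 1) →
        (∃ k, x k = 1 - η₁.1 k) → PhiV n θv θe x ≤ (V₁ + (m - α))/2 := by
      intro x hhx hdx
      obtain ⟨w0, hw0⟩ := hdx
      have hclass : ∀ k, x k = η₁.1 k ∨ x k = 1 - η₁.1 k ∨ x k = 1/2 :=
        fun k => class_of (hz k) (hhx k)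
      set xh : Fin n → ℝ := fun k => if x k = η₁.1 k then η₁.1 k else 1/2 with hxh
      set xd : Fin n → ℝ := fun k => if x k = 1/2 then η₁.1 k else x k with hxd
      have hxd_app : ∀ k, xd k = if x k = 1/2 then η₁.1 k else x k := fun k => rfl
      have hs1 := sum_comb (Finset.univ : Finset (Fin n)) (fun k => θv k * xh k)
        (fun k => θv k * xd k) (fun k => θv k * x k) (fun k => θv k * η₁.1 k)
      have hs2 := sum_comb (Finset.univ : Finset (Fin n × Fin n))
        (fun e => optY (θe e) (xh e.1) (xh e.2)) (fun e => optY (θe e) (xd e.1) (xd e.2))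
        (fun e => optY (θe e) (x e.1) (x e.2)) (fun e => optY (θe e) (η₁.1 e.1) (η₁.1 e.2))
      have hu : (∑ k, (2 * (θv k * xh k) + (θv k * xd k) - 2 * (θv k * x k)
          - θv k * η₁.1 k)) = 0 := by
        apply Finset.sum_eq_zero
        intro k _
        have h0 : 2 * xh k + xd k - 2 * x k - η₁.1 k = 0 := by
          simpa [hxh, hxd] using unary_core (hz k) (hclass k)
        linear_combination (θv k) * h0
      have he : (0:ℝ) ≤ ∑ e : Fin n × Fin n, (2 * optY (θe e) (xh e.1) (xh e.2)
          + optY (θe e) (xd e.1) (xd e.2) - 2 * optY (θe e) (x e.1) (x e.2)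
          - optY (θe e) (η₁.1 e.1) (η₁.1 e.2)) := by
        apply Finset.sum_nonneg
        intro e _
        have h := edge_core (θe e) (hz e.1) (hz e.2) (hclass e.1) (hclass e.2)
        simpa [hxh, hxd] using h
      have hcore : 2 * PhiV n θv θe x + m ≤ 2 * PhiV n θv θe xh + PhiV n θv θe xd := by
        have hΦz' := hΦz
        unfold PhiV at hΦz' ⊢
        linarith [hs1, hs2, hu, he]
      have hxh_b : ∀ k, 0 ≤ xh k ∧ xh k ≤ 1 := by
        intro k
        by_cases h : x k = η₁.1 k
        · simpa [hxh, h] using hη₁b k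
        · simp [hxh, h]; norm_num
      have hxhw : xh w0 = 1/2 := by
        have hne : x w0 ≠ η₁.1 w0 := by
          rw [hw0]; rcases hz w0 with h | h <;> rw [h] <;> norm_num
        simp [hxh, hne]
      have hΦxh : PhiV n θv θe xh ≤ (m + V₁)/2 := by
        rw [← hPval]
        exact hKEY w0 (selP n θe xh) (hPmem xh hxh_b) hxhw
      have hxd_int : ∀ k, xd k = 0 ∨ xd k = 1 := by
        intro k
        by_cases h : x k = 1/2
        · simpa [hxd, h] using hz k
        · rcases hhx k with h0 | h0 | h0
          · left; rw [hxd_app k, if_neg h]; exact h0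
          · exact absurd h0 h
          · right; rw [hxd_app k, if_neg h]; exact h0
      have hxd_b : ∀ k, 0 ≤ xd k ∧ xd k ≤ 1 := by
        intro k
        rcases hxd_int k with h | h <;> rw [h] <;> norm_num
      have hxdL : selP n θe xd ∈ L := hPmem xd hxd_b
      have hsnd_forced : ∀ r, r ∈ L → r.1 = xd → r.2 = fun e => optSel (θe e) (xd e.1) (xd e.2) := by
        intro r hr hr1
        funext e
        have hbnd := ((memL r).1 hr).2 e
        rw [hr1] at hbnd
        have hforced := int_forced (hxd_int e.1) (hxd_int e.2)
        have h1 : r.2 e = min (xd e.1) (xd e.2) := le_antisymm hbnd.2 (hforced ▸ hbnd.1)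
        have h2 : optSel (θe e) (xd e.1) (xd e.2) = min (xd e.1) (xd e.2) := by
          refine le_antisymm (optSel_ub (hxd_b e.1).1 (hxd_b e.1).2 (hxd_b e.2).1 (hxd_b e.2).2) ?_
          exact hforced ▸ optSel_lb (hxd_b e.1).1 (hxd_b e.1).2 (hxd_b e.2).1 (hxd_b e.2).2
        rw [h1, h2]
      have hxd_ext : selP n θe xd ∈ Set.extremePoints ℝ L := by
        refine ⟨hxdL, fun p hp q hq hseg => ?_⟩
        obtain ⟨a, b, ha, hb, hab, hcomb⟩ := hseg
        have hforall : ∀ j, p.1 j = xd j ∧ q.1 j = xd j := by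
          intro j
          have hcoord : a * p.1 j + b * q.1 j = xd j := by
            have h := congrArg (fun t => t.1 j) hcomb
            simpa [selP] using h
          exact endpoint_force ha hb hab (((memL p).1 hp).1 j).1 (((memL p).1 hp).1 j).2
            (((memL q).1 hq).1 j).1 (((memL q).1 hq).1 j).2 hcoord (hxd_int j)
        have hp1 : p.1 = xd := funext fun j => (hforall j).1
        have hq1 : q.1 = xd := funext fun j => (hforall j).2
        exact Prod.ext hp1 (hsnd_forced p hp hp1)
      have hxdne : selP n θe xd ≠ η₁ := by
        intro hEq
        have h := congrFun (congrArg Prod.fst hEq) w0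
        have hx0 : x w0 ≠ 1/2 := by
          rw [hw0]; rcases hz w0 with hh | hh <;> rw [hh] <;> norm_num
        have hxdw : xd w0 = x w0 := by rw [hxd_app w0, if_neg hx0]
        have h' : xd w0 = η₁.1 w0 := h
        rw [hxdw, hw0] at h'
        rcases hz w0 with hh | hh <;> rw [hh] at h' <;> norm_num at h'
      have hΦxd : PhiV n θv θe xd ≤ m - α := by
        rw [← hPval]
        exact hsecond (selP n θe xd) hxd_ext (fun j => hxd_int j) hxdne
      linarith
    have hV₁le : V₁ ≤ m - α := by
      have hle : V₁ ≤ (V₁ + (m - α))/2 := by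
        rw [hV₁def]
        refine csSup_le (hDne.image _) ?_
        rintro y ⟨x, hx, rfl⟩
        exact hcfg x hx.1 hx.2
      linarith
    have hηhalf : η.1 i = 1/2 := by
      have hmem3 := (hhalf η hη).1 i
      simp only [Set.mem_insert_iff, Set.mem_singleton_iff] at hmem3
      rcases hmem3 with h | h | h
      · exact absurd (Or.inl h) hi
      · exact h
      · exact absurd (Or.inr h) hi
    have hfinal := hKEY i η hη.1 hηhalf
    linarith
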